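/- For any graph G, χ(G) ≤ (1 + 2√2)^{2ξ(G)}, where ξ(G) is the least dimension of a complex orthogonal representation of G. -/

import Mathlib

open Metric MeasureTheory Module Set ENNReal

lemma packing_card_le {E : Type*} [NormedAddCommGroup E] [NormedSpace ℝ E]
    [FiniteDimensional ℝ E] {δ : ℝ} (hδ : 0 < δ) (s : Finset E)
    (hs : ∀ c ∈ s, ‖c‖ ≤ 1) (h : ∀ c ∈ s, ∀ d ∈ s, c ≠ d → 2 * δ ≤ ‖c - d‖) :
    (s.card : ℝ) ≤ ((1 + δ) / δ) ^ finrank ℝ E := by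
  borelize E
  let μ : Measure E := Measure.addHaar
  have ρpos : (0:ℝ) < 1 + δ := by linarith
  set A := ⋃ c ∈ s, ball (c : E) δ with hA
  have D : Set.Pairwise (s : Set E) (Function.onFun Disjoint fun c => ball (c : E) δ) := by
    rintro c hc d hd hcd
    apply ball_disjoint_ball
    rw [dist_eq_norm]
    have := h c hc d hd hcd
    linarith
  have A_subset : A ⊆ ball (0 : E) (1 + δ) := by
    refine iUnion₂_subset fun x hx => ?_
    apply ball_subset_ball'
    have := hs x hx
    rw [dist_zero_right]
    linarith
  have I :
      (s.card : ℝ≥0∞) * ENNReal.ofReal (δ ^ finrank ℝ E) * μ (ball 0 1) ≤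
        ENNReal.ofReal ((1 + δ) ^ finrank ℝ E) * μ (ball 0 1) :=
    calc
      (s.card : ℝ≥0∞) * ENNReal.ofReal (δ ^ finrank ℝ E) * μ (ball 0 1) = μ A := by
        rw [hA, measure_biUnion_finset D fun c _ => measurableSet_ball]
        simp only [μ.addHaar_ball_of_pos _ hδ]
        simp only [Finset.sum_const, nsmul_eq_mul, mul_assoc]
      _ ≤ μ (ball (0 : E) (1 + δ)) := measure_mono A_subset
      _ = ENNReal.ofReal ((1 + δ) ^ finrank ℝ E) * μ (ball 0 1) := by
        simp only [μ.addHaar_ball_of_pos _ ρpos]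
  have J : (s.card : ℝ≥0∞) * ENNReal.ofReal (δ ^ finrank ℝ E) ≤
      ENNReal.ofReal ((1 + δ) ^ finrank ℝ E) :=
    (ENNReal.mul_le_mul_iff_left (measure_ball_pos _ _ zero_lt_one).ne' measure_ball_lt_top.ne).1 I
  have K := ENNReal.toReal_le_of_le_ofReal (pow_nonneg ρpos.le _) J
  rw [ENNReal.toReal_mul, ENNReal.toReal_ofReal (pow_nonneg hδ.le _), ENNReal.toReal_natCast] at K
  rw [div_pow, le_div_iff₀ (pow_pos hδ _)]
  exact K

/-- Orthogonal rank: least `c` such that `G` has an orthogonal representation in `ℂ^c`. -/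
noncomputable def xi {V : Type*} (G : SimpleGraph V) : ℕ :=
  sInf {c | ∃ φ : V → EuclideanSpace ℂ (Fin c),
    (∀ v, φ v ≠ 0) ∧ ∀ v w, G.Adj v w → (inner ℂ (φ v) (φ w) : ℂ) = 0}

/-- For any (finite) graph `G`, `χ(G) ≤ (1 + 2√2)^{2 ξ(G)}`. -/
theorem stmt17 {V : Type*} [Fintype V] (G : SimpleGraph V) :
    ∃ n : ℕ, G.Colorable n ∧ (n : ℝ) ≤ (1 + 2 * Real.sqrt 2) ^ (2 * xi G) := by
  classical
  have sqrt2_pos : (0:ℝ) < Real.sqrt 2 := Real.sqrt_pos.2 (by norm_num)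
  have sqrt2_sq : Real.sqrt 2 * Real.sqrt 2 = 2 := Real.mul_self_sqrt (by norm_num)
  -- the defining set is nonempty
  have hne : {c | ∃ φ : V → EuclideanSpace ℂ (Fin c),
      (∀ v, φ v ≠ 0) ∧ ∀ v w, G.Adj v w → (inner ℂ (φ v) (φ w) : ℂ) = 0}.Nonempty := by
    refine ⟨Fintype.card V, fun v => EuclideanSpace.single (Fintype.equivFin V v) 1, ?_, ?_⟩
    · intro v hv
      have := congrArg (fun x : EuclideanSpace ℂ (Fin (Fintype.card V)) => x (Fintype.equivFin V v)) hv
      simp [EuclideanSpace.single_apply] at this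
    · intro v w hvw
      rw [EuclideanSpace.inner_single_left]
      simp [EuclideanSpace.single_apply, (Fintype.equivFin V).injective.ne (G.ne_of_adj hvw)]
  set k := xi G with hkdef
  obtain ⟨φ, hφ0, hφo⟩ := Nat.sInf_mem hne
  set E := EuclideanSpace ℂ (Fin k)
  set ψ : V → E := fun v => (‖φ v‖ : ℂ)⁻¹ • φ v with hψdef
  have hψ1 : ∀ v, ‖ψ v‖ = 1 := by
    intro v
    have h0 : ‖φ v‖ ≠ 0 := norm_ne_zero_iff.2 (hφ0 v)
    change ‖(‖φ v‖ : ℂ)⁻¹ • φ v‖ = 1; rw [norm_smul, norm_inv, Complex.norm_real, norm_norm, inv_mul_cancel₀ h0]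
  have hψo : ∀ v w, G.Adj v w → (inner ℂ (ψ v) (ψ w) : ℂ) = 0 := by
    intro v w hvw
    change inner ℂ ((‖φ v‖ : ℂ)⁻¹ • φ v) ((‖φ w‖ : ℂ)⁻¹ • φ w) = 0
    simp [hψdef, inner_smul_left, inner_smul_right, hφo v w hvw]
  have hdist : ∀ v w, G.Adj v w → ‖ψ v - ψ w‖ = Real.sqrt 2 := by
    intro v w hvw
    have hsq : ‖ψ v - ψ w‖ ^ 2 = 2 := by
      rw [@norm_sub_sq ℂ, hψo v w hvw, hψ1, hψ1]
      norm_num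
    rw [← Real.sqrt_sq (norm_nonneg _), hsq]
  -- maximal separated subset of the image of ψ
  set S : Finset E := Finset.image ψ Finset.univ with hSdef
  set sep : Finset E → Prop :=
    fun T => ∀ c ∈ T, ∀ d ∈ T, c ≠ d → Real.sqrt 2 / 2 ≤ ‖c - d‖ with hsepdef
  have hCne : (S.powerset.filter sep).Nonempty := by
    refine ⟨∅, ?_⟩
    simp [hsepdef]
  obtain ⟨T, hTmem, hTmax⟩ := Finset.exists_maximal hCne
  rw [Finset.mem_filter, Finset.mem_powerset] at hTmem
  obtain ⟨hTS, hTsep⟩ := hTmem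
  -- every ψ v is close to a point of T
  have hclose : ∀ v : V, ∃ t ∈ T, ‖ψ v - t‖ < Real.sqrt 2 / 2 := by
    intro v
    by_contra hcon
    push_neg at hcon
    have hvT : ψ v ∉ T := by
      intro hmem
      have := hcon (ψ v) hmem
      simp at this
      linarith
    have hins : insert (ψ v) T ∈ S.powerset.filter sep := by
      rw [Finset.mem_filter, Finset.mem_powerset]
      constructor
      · intro x hx
        rcases Finset.mem_insert.1 hx with rfl | hx
        · exact Finset.mem_image.2 ⟨v, Finset.mem_univ _, rfl⟩
        · exact hTS hx
      · intro c hc d hd hcd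
        rcases Finset.mem_insert.1 hc with rfl | hc
        · rcases Finset.mem_insert.1 hd with rfl | hd
          · exact absurd rfl hcd
          · exact hcon d hd
        · rcases Finset.mem_insert.1 hd with rfl | hd
          · rw [norm_sub_rev]; exact hcon c hc
          · exact hTsep c hc d hd hcd
    exact (Finset.ssubset_insert hvT).2 (hTmax hins (Finset.ssubset_insert hvT).1)
  choose f hfT hfd using hclose
  -- the coloring
  have hcol : G.Colorable T.card := by
    have : Fintype.card {x // x ∈ T} = T.card := Fintype.card_coe T
    rw [← this]
    refine (SimpleGraph.Coloring.mk (fun v => (⟨f v, hfT v⟩ : {x // x ∈ T})) ?_).colorable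
    intro v w hvw heq
    have h1 : f v = f w := congrArg Subtype.val heq
    have h2 := hdist v w hvw
    have h3 : ‖ψ v - ψ w‖ ≤ ‖ψ v - f v‖ + ‖f w - ψ w‖ := by
      have := norm_sub_le_norm_sub_add_norm_sub (ψ v) (f v) (ψ w)
      rw [h1] at this
      calc ‖ψ v - ψ w‖ ≤ ‖ψ v - f w‖ + ‖f w - ψ w‖ := norm_sub_le_norm_sub_add_norm_sub _ _ _
        _ = ‖ψ v - f v‖ + ‖f w - ψ w‖ := by rw [h1]
    have h4 := hfd v
    have h5 : ‖f w - ψ w‖ < Real.sqrt 2 / 2 := by rw [norm_sub_rev]; exact hfd w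
    rw [h2] at h3
    linarith
  refine ⟨T.card, hcol, ?_⟩
  -- cardinality bound via packing
  have hδ : (0:ℝ) < Real.sqrt 2 / 4 := by linarith
  have hbound := packing_card_le hδ T
      (fun c hc => by
        obtain ⟨v, _, rfl⟩ := Finset.mem_image.1 (hTS hc)
        rw [hψ1 v])
      (fun c hc d hd hcd => by
        have := hTsep c hc d hd hcd
        linarith)
  have hfr : finrank ℝ E = 2 * k := by
    rw [← Module.finrank_mul_finrank ℝ ℂ E, Complex.finrank_real_complex,
      finrank_euclideanSpace_fin]
  rw [hfr] at hbound
  refine hbound.trans (le_of_eq ?_)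
  congr 1
  rw [div_eq_iff (by positivity)]
  ring_nf
  nlinarith [sqrt2_sq]
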